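/- Let R be a commutative ring with identity and let n, m ≥ 1. If n ≠ m, then every natural transformation with R-linear components from the functor T_n : V ↦ V^{⊗n} to the functor T_m : V ↦ V^{⊗m} is zero, i.e., Hom(T_n, T_m) = 0. Moreover, the map θ : End_{R(Σ_n)}(γ_n) → End(T_n), sending φ to the natural endomorphism whose component at V is φ ⊗_{R(Σ_n)} id_{V^{⊗n}} under the canonical identification γ_n ⊗_{R(Σ_n)} V^{⊗n} ≅ V^{⊗n}, is an isomorphism of rings. -/

import Mathlib

open scoped TensorProduct
open PiTensorProduct

noncomputable section

universe u

variable (R : Type u) [CommRing R]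

/-- The operator on the `n`-th tensor power of `V` permuting the tensor positions
according to `σ`. -/
def pact (V : Type u) [AddCommGroup V] [Module R V] (n : ℕ) (σ : Equiv.Perm (Fin n)) :
    (⨂[R]^n V) →ₗ[R] (⨂[R]^n V) :=
  (PiTensorProduct.reindex R (fun _ : Fin n => V) σ).toLinearMap

/-- The functorial action of a linear map on the `n`-th tensor power. -/
def tmap {V W : Type u} [AddCommGroup V] [Module R V] [AddCommGroup W] [Module R W]
    (n : ℕ) (f : V →ₗ[R] W) : (⨂[R]^n V) →ₗ[R] (⨂[R]^n W) :=
  PiTensorProduct.map fun _ => f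

/-- Auxiliary operators: `betaAux R V n c k` is the operator on `V^{⊗n}` which applies
the (signed, with signs `c`) left-normed bracketing to the first `k+1` tensor factors. -/
def betaAux (V : Type u) [AddCommGroup V] [Module R V] (n : ℕ) (c : ℕ → R) :
    ℕ → ((⨂[R]^n V) →ₗ[R] (⨂[R]^n V))
  | 0 => LinearMap.id
  | k + 1 =>
    if h : k + 1 < n then
      (LinearMap.id - c (k + 1) • pact R V n (Fin.cycleRange ⟨k + 1, h⟩)) ∘ₗ
        betaAux V n c k
    else betaAux V n c k

/-- `β_n : V^{⊗n} → V^{⊗n}`, the linear map sending `a₁ ⊗ ⋯ ⊗ a_n` to the left-normed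
iterated commutator `[[a₁,a₂],…,a_n]` (with `[a,b] = ab - ba`), regarded inside `V^{⊗n}`. -/
def beta (V : Type u) [AddCommGroup V] [Module R V] (n : ℕ) :
    (⨂[R]^n V) →ₗ[R] (⨂[R]^n V) :=
  betaAux R V n (fun _ => 1) (n - 1)

/-- `L_n(V) = Im(β_n) ⊆ V^{⊗n}`. -/
def Lsub (V : Type u) [AddCommGroup V] [Module R V] (n : ℕ) : Submodule R (⨂[R]^n V) :=
  LinearMap.range (beta R V n)

variable {n : ℕ} {A : Type u} [AddCommGroup A] [Module R A]

/-- Given a basis `e` of the free module `V̄`, the word `e_{σ(1)} ⊗ ⋯ ⊗ e_{σ(n)}`. -/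
def eword (b : Module.Basis (Fin n) R A) (σ : Equiv.Perm (Fin n)) : ⨂[R]^n A :=
  tprod R fun i => b (σ i)

/-- `γ_n ⊆ V̄^{⊗n}`, the span of the words `e_{σ(1)} ⊗ ⋯ ⊗ e_{σ(n)}` for `σ ∈ Σ_n`. -/
def gammaN (b : Module.Basis (Fin n) R A) : Submodule R (⨂[R]^n A) :=
  Submodule.span R (Set.range (eword R b))

/-- The action of `σ ∈ Σ_n` on `V̄^{⊗n}` by permuting the letters `e_1, …, e_n`,
induced by the linear automorphism `e_i ↦ e_{σ(i)}` of `V̄`. -/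
def lact (b : Module.Basis (Fin n) R A) (σ : Equiv.Perm (Fin n)) :
    (⨂[R]^n A) →ₗ[R] (⨂[R]^n A) :=
  tmap R n (b.equiv b (σ : Fin n ≃ Fin n)).toLinearMap

/-- `Lie(n) = γ_n ∩ L_n(V̄)`. -/
def LieN (b : Module.Basis (Fin n) R A) : Submodule R (⨂[R]^n A) :=
  gammaN R b ⊓ Lsub R A n

/-- The coordinate functional on `V̄^{⊗n}` dual to the word `e_{w(1)} ⊗ ⋯ ⊗ e_{w(n)}`. -/
def lamb (b : Module.Basis (Fin n) R A) (w : Fin n → Fin n) : (⨂[R]^n A) →ₗ[R] R :=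
  PiTensorProduct.lift
    ((MultilinearMap.mkPiAlgebra R (Fin n) R).compLinearMap fun i => b.coord (w i))

/-- The substitution pairing `γ_n ⊗ V^{⊗n} → V^{⊗n}` (extended by zero off `γ_n`):
`(e_{σ(1)} ⊗ ⋯ ⊗ e_{σ(n)}) ⊗ (x_1 ⊗ ⋯ ⊗ x_n) ↦ x_{σ(1)} ⊗ ⋯ ⊗ x_{σ(n)}`,
realizing the canonical identification `γ_n ⊗_{R(Σ_n)} V^{⊗n} ≅ V^{⊗n}`. -/
def cpair (b : Module.Basis (Fin n) R A) (V : Type u) [AddCommGroup V] [Module R V] :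
    (⨂[R]^n A) →ₗ[R] (⨂[R]^n V) →ₗ[R] (⨂[R]^n V) :=
  ∑ σ : Equiv.Perm (Fin n), (lamb R b ⇑σ).smulRight (pact R V n σ⁻¹)

/-- The submodule of balancing relations defining `M ⊗_{R(Σ_n)} V^{⊗n}` for a
`Σ_n`-invariant submodule `M` of `V̄^{⊗n}` (where the right `R(Σ_n)`-module structure
on `M` is the letter action composed with inversion). -/
def relSpan (b : Module.Basis (Fin n) R A) (M : Submodule R (⨂[R]^n A))
    (V : Type u) [AddCommGroup V] [Module R V] :
    Submodule R (↥M ⊗[R] (⨂[R]^n V)) :=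
  Submodule.span R
    {z | ∃ (σ : Equiv.Perm (Fin n)) (q : M) (h : lact R b σ ↑q ∈ M) (x : ⨂[R]^n V),
      z = (⟨lact R b σ ↑q, h⟩ : M) ⊗ₜ[R] x - (q : ↥M) ⊗ₜ[R] (pact R V n σ⁻¹ x)}


/-- The type of families of linear endomorphisms of `V^{⊗n}`, one for each `R`-module. -/
def TnEnd (n : ℕ) :=
  ∀ (V : Type u) [AddCommGroup V] [Module R V], (⨂[R]^n V) →ₗ[R] (⨂[R]^n V)

/-- Naturality for a family of endomorphisms of the functor `T_n : V ↦ V^{⊗n}`. -/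
def IsNaturalT (n : ℕ) (η : TnEnd R n) : Prop :=
  ∀ (V W : Type u) [AddCommGroup V] [Module R V] [AddCommGroup W] [Module R W]
    (f : V →ₗ[R] W), (η W) ∘ₗ (tmap R n f) = (tmap R n f) ∘ₗ (η V)

/-- An endomorphism of `V̄^{⊗n}` preserving a submodule `M` and commuting with the
letter-permutation action of `Σ_n` on it, i.e. an `R(Σ_n)`-endomorphism of `M`. -/
def IsEquivariant (b : Module.Basis (Fin n) R A) (M : Submodule R (⨂[R]^n A))
    (φ : ↥M →ₗ[R] ↥M) : Prop :=
  ∀ (σ : Equiv.Perm (Fin n)) (q : ↥M) (h : lact R b σ ↑q ∈ M),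
    (↑(φ ⟨lact R b σ ↑q, h⟩) : ⨂[R]^n A) = lact R b σ ↑(φ q)

/-- `CorrT φ η` says that the natural endomorphism `η` of `T_n` corresponds to the
`R(Σ_n)`-endomorphism `φ` of `γ_n`, i.e. that the component of `η` at `V` is
`φ ⊗_{R(Σ_n)} id_{V^{⊗n}}` under the canonical identification
`γ_n ⊗_{R(Σ_n)} V^{⊗n} ≅ V^{⊗n}`: equivalently (as expressed here), the component
of `η` at the free module `V̄` restricts to `φ` on `γ_n ⊆ V̄^{⊗n}`. -/
def CorrT (b : Module.Basis (Fin n) R A) (φ : ↥(gammaN R b) →ₗ[R] ↥(gammaN R b))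
    (η : TnEnd R n) : Prop :=
  ∀ q : ↥(gammaN R b), η A ↑q = ↑(φ q)


/-! ### Auxiliary machinery -/

section AuxMachinery

variable {R}

/-- A generic word in a basis. -/
def wrd {m : ℕ} {ι : Type*} {B : Type u} [AddCommGroup B] [Module R B]
    (c : Module.Basis ι R B) (v : Fin m → ι) : ⨂[R]^m B :=
  tprod R fun j => c (v j)

/-- The generic coordinate functional dual to a word. -/
def fc {m : ℕ} {ι : Type*} {B : Type u} [AddCommGroup B] [Module R B]
    (c : Module.Basis ι R B) (v : Fin m → ι) : (⨂[R]^m B) →ₗ[R] R :=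
  PiTensorProduct.lift
    ((MultilinearMap.mkPiAlgebra R (Fin m) R).compLinearMap fun j => c.coord (v j))

variable {m : ℕ} {ι : Type*} {B : Type u} [AddCommGroup B] [Module R B]

lemma fc_tprod (c : Module.Basis ι R B) (v : Fin m → ι) (x : Fin m → B) :
    fc c v (tprod R x) = ∏ j, c.coord (v j) (x j) := by
  simp [fc]

lemma tmap_tprod {V W : Type u} [AddCommGroup V] [Module R V] [AddCommGroup W] [Module R W]
    (f : V →ₗ[R] W) (x : Fin m → V) :
    tmap R m f (tprod R x) = tprod R fun j => f (x j) := by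
  simp [tmap]

lemma tprod_expand [Fintype ι] [DecidableEq ι] (c : Module.Basis ι R B) (x : Fin m → B) :
    tprod R x = ∑ v : Fin m → ι, (∏ j, c.coord (v j) (x j)) • wrd c v := by
  have h0 : tprod R x
      = (tprod R (s := fun _ : Fin m => B)) (fun j => ∑ i : ι, c.repr (x j) i • c i) := by
    congr 1; funext j; rw [c.sum_repr]
  rw [h0, MultilinearMap.map_sum]
  refine Finset.sum_congr rfl fun v _ => ?_
  rw [MultilinearMap.map_smul_univ]
  simp [wrd, Module.Basis.coord_apply]

lemma pt_expand [Fintype ι] [DecidableEq ι] (c : Module.Basis ι R B) (y : ⨂[R]^m B) :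
    y = ∑ v : Fin m → ι, fc c v y • wrd c v := by
  induction y using PiTensorProduct.induction_on with
  | smul_tprod r x =>
    simp only [map_smul, smul_eq_mul, fc_tprod]
    rw [show (fun v : Fin m → ι => (r * ∏ j, c.coord (v j) (x j)) • wrd c v)
        = fun v : Fin m → ι => r • ((∏ j, c.coord (v j) (x j)) • wrd c v) from
      funext fun v => by rw [mul_smul]]
    rw [← Finset.smul_sum, ← tprod_expand c x]
  | add x y hx hy =>
    simp only [map_add, add_smul, Finset.sum_add_distrib, ← hx, ← hy]

lemma fc_wrd [DecidableEq ι] (c : Module.Basis ι R B) (v w : Fin m → ι) :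
    fc c v (wrd c w) = if v = w then 1 else 0 := by
  rw [wrd, fc_tprod]
  by_cases h : v = w
  · subst h; simp
  · obtain ⟨j, hj⟩ := Function.ne_iff.mp h
    rw [if_neg h]
    refine Finset.prod_eq_zero (Finset.mem_univ j) ?_
    simp only [Module.Basis.coord_apply, Module.Basis.repr_self, Finsupp.single_apply]
    rw [if_neg (fun hh => hj hh.symm)]

lemma pact_inv_tprod (V : Type u) [AddCommGroup V] [Module R V] (σ : Equiv.Perm (Fin n))
    (x : Fin n → V) :
    pact R V n σ⁻¹ (tprod R x) = tprod R fun i => x (σ i) := by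
  simp only [pact, LinearEquiv.coe_coe, PiTensorProduct.reindex_tprod]
  congr 1

/-! ### Words in the basis of `A` -/

lemma eword_eq_wrd (b : Module.Basis (Fin n) R A) (σ : Equiv.Perm (Fin n)) :
    eword R b σ = wrd b ⇑σ := rfl

lemma lamb_eq_fc (b : Module.Basis (Fin n) R A) (w : Fin n → Fin n) :
    lamb R b w = fc b w := rfl

lemma eword_mem (b : Module.Basis (Fin n) R A) (σ : Equiv.Perm (Fin n)) :
    eword R b σ ∈ gammaN R b :=
  Submodule.subset_span ⟨σ, rfl⟩

lemma lact_eword (b : Module.Basis (Fin n) R A) (σ τ : Equiv.Perm (Fin n)) :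
    lact R b σ (eword R b τ) = eword R b (σ * τ) := by
  rw [lact, eword, tmap_tprod]
  congr 1; funext i; simp [Module.Basis.equiv_apply]

lemma lact_mem (b : Module.Basis (Fin n) R A) (σ : Equiv.Perm (Fin n)) {x : ⨂[R]^n A}
    (hx : x ∈ gammaN R b) : lact R b σ x ∈ gammaN R b := by
  refine Submodule.span_induction (p := fun x _ => lact R b σ x ∈ gammaN R b)
    ?_ ?_ ?_ ?_ hx
  · rintro x ⟨τ, rfl⟩
    rw [lact_eword]
    exact eword_mem b (σ * τ)
  · show lact R b σ 0 ∈ gammaN R b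
    rw [map_zero]; exact Submodule.zero_mem _
  · intro x y _ _ hx hy
    show lact R b σ (x + y) ∈ gammaN R b
    rw [map_add]; exact Submodule.add_mem _ hx hy
  · intro a x _ hx
    show lact R b σ (a • x) ∈ gammaN R b
    rw [map_smul]; exact Submodule.smul_mem _ _ hx

lemma pact_eword (b : Module.Basis (Fin n) R A) (ρ σ : Equiv.Perm (Fin n)) :
    pact R A n ρ⁻¹ (eword R b σ) = eword R b (σ * ρ) := by
  rw [eword, pact_inv_tprod]
  rfl

lemma tmap_constr_eword {V : Type u} [AddCommGroup V] [Module R V]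
    (b : Module.Basis (Fin n) R A) (x : Fin n → V) (σ : Equiv.Perm (Fin n)) :
    tmap R n (b.constr ℕ x) (eword R b σ) = tprod R fun i => x (σ i) := by
  rw [eword, tmap_tprod]
  congr 1; funext i; simp

lemma gamma_expand (b : Module.Basis (Fin n) R A) {x : ⨂[R]^n A} (hx : x ∈ gammaN R b) :
    x = ∑ σ : Equiv.Perm (Fin n), lamb R b ⇑σ x • eword R b σ := by
  refine Submodule.span_induction
    (p := fun x _ => x = ∑ σ : Equiv.Perm (Fin n), lamb R b ⇑σ x • eword R b σ)
    ?_ ?_ ?_ ?_ hx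
  · rintro x ⟨τ, rfl⟩
    rw [show (fun σ : Equiv.Perm (Fin n) => lamb R b ⇑σ (eword R b τ) • eword R b σ)
        = fun σ : Equiv.Perm (Fin n) => if σ = τ then eword R b σ else 0 from
      funext fun σ => by
        rw [lamb_eq_fc, eword_eq_wrd, fc_wrd]
        by_cases h : σ = τ
        · simp [h]
        · rw [if_neg (fun hh => h (Equiv.coe_fn_injective hh)), if_neg h, zero_smul]]
    rw [Finset.sum_ite_eq' Finset.univ τ]
    simp
  · simp
  · intro x y _ _ hx hy
    simp only [map_add, add_smul, Finset.sum_add_distrib, ← hx, ← hy]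
  · intro a x _ hx
    simp only [map_smul, smul_eq_mul, mul_smul, ← Finset.smul_sum, ← hx]

/-! ### Vanishing of coefficients -/

lemma pt_funext {m : ℕ} {B : Type u} [AddCommGroup B] [Module R B]
    {M : Type u} [AddCommGroup M] [Module R M] {F G : (⨂[R]^m B) →ₗ[R] M}
    (hfg : ∀ x : Fin m → B, F (tprod R x) = G (tprod R x)) : F = G :=
  PiTensorProduct.ext (MultilinearMap.ext hfg)

lemma coord_basis {ι : Type*} {B : Type u} [AddCommGroup B] [Module R B]
    [DecidableEq ι] (c : Module.Basis ι R B) (t k : ι) :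
    c.coord t (c k) = if k = t then 1 else 0 := by
  rw [Module.Basis.coord_apply, Module.Basis.repr_self_apply]

lemma coeff_nonsurj {m : ℕ} (b : Module.Basis (Fin n) R A)
    (E : (⨂[R]^n A) →ₗ[R] (⨂[R]^m A))
    (hnat : ∀ f : A →ₗ[R] A, E ∘ₗ tmap R n f = tmap R m f ∘ₗ E)
    (τ : Equiv.Perm (Fin n)) (u : Fin m → Fin n) (hu : ¬ Function.Surjective u) :
    fc b u (E (eword R b τ)) = 0 := by
  classical
  rw [Function.Surjective] at hu
  push_neg at hu
  obtain ⟨i₀, hi₀⟩ := hu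
  set d : A →ₗ[R] A := b.constr ℕ (fun i => if i = i₀ then 0 else b i) with hd
  have hdb : ∀ k, d (b k) = if k = i₀ then 0 else b k := fun k => by
    rw [hd, Module.Basis.constr_basis]
  have hco : ∀ j : Fin m, b.coord (u j) ∘ₗ d = b.coord (u j) := by
    intro j
    refine b.ext fun k => ?_
    rw [LinearMap.comp_apply, hdb]
    by_cases hk : k = i₀
    · subst hk
      rw [if_pos rfl, map_zero, coord_basis, if_neg (fun hh => hi₀ j hh.symm)]
    · rw [if_neg hk]
  have h1 : fc b u ∘ₗ tmap R m d = fc b u := by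
    refine pt_funext fun x => ?_
    simp only [LinearMap.comp_apply, tmap_tprod, fc_tprod]
    exact Finset.prod_congr rfl fun j _ => LinearMap.congr_fun (hco j) (x j)
  have h2 : tmap R n d (eword R b τ) = 0 := by
    rw [eword, tmap_tprod]
    refine MultilinearMap.map_coord_zero _ (τ.symm i₀) ?_
    show d (b (τ (τ.symm i₀))) = 0
    rw [Equiv.apply_symm_apply, hdb, if_pos rfl]
  have h3 : E (tmap R n d (eword R b τ)) = tmap R m d (E (eword R b τ)) := by
    have := LinearMap.congr_fun (hnat d) (eword R b τ)
    simpa only [LinearMap.comp_apply] using this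
  calc fc b u (E (eword R b τ))
      = fc b u (tmap R m d (E (eword R b τ))) := (LinearMap.congr_fun h1 _).symm
    _ = fc b u (E (tmap R n d (eword R b τ))) := by rw [h3]
    _ = 0 := by rw [h2, map_zero, map_zero]

lemma coeff_noninj {m : ℕ} (b : Module.Basis (Fin n) R A)
    (η : ∀ (V : Type u) [AddCommGroup V] [Module R V], (⨂[R]^n V) →ₗ[R] (⨂[R]^m V))
    (hnat : ∀ (V W : Type u) [AddCommGroup V] [Module R V] [AddCommGroup W] [Module R W]
      (f : V →ₗ[R] W), (η W) ∘ₗ (tmap R n f) = (tmap R m f) ∘ₗ (η V))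
    (u : Fin m → Fin n) (j₁ j₂ : Fin m) (hj : j₁ ≠ j₂) (huu : u j₁ = u j₂) :
    fc b u (η A (eword R b 1)) = 0 := by
  classical
  set i' : Fin (n+1) := Fin.castSucc (u j₁) with hi'
  set l : Fin (n+1) := Fin.last n with hl
  have hil : i' ≠ l := (Fin.castSucc_lt_last (u j₁)).ne
  set c : Module.Basis (Fin (n+1)) R (Fin (n+1) → R) := Pi.basisFun R (Fin (n+1)) with hcb
  set ι₁ : A →ₗ[R] (Fin (n+1) → R) := b.constr ℕ (fun i => c (Fin.castSucc i)) with hι₁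
  have hι₁b : ∀ k, ι₁ (b k) = c (Fin.castSucc k) := fun k => by
    rw [hι₁, Module.Basis.constr_basis]
  set g : (Fin (n+1) → R) →ₗ[R] (Fin (n+1) → R) :=
    c.constr ℕ (fun k => if k = i' then c i' + c l else c k) with hg
  have hgb : ∀ k, g (c k) = if k = i' then c i' + c l else c k := fun k => by
    rw [hg, Module.Basis.constr_basis]
  set h : (Fin (n+1) → R) →ₗ[R] (Fin (n+1) → R) :=
    c.constr ℕ (fun k => if k = i' then c l else c k) with hh
  have hhb : ∀ k, h (c k) = if k = i' then c l else c k := fun k => by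
    rw [hh, Module.Basis.constr_basis]
  set y : ⨂[R]^m A := η A (eword R b 1) with hy
  set z : ⨂[R]^m (Fin (n+1) → R) := tmap R m ι₁ y with hz
  set ρ' : Fin n → Fin (n+1) := Function.update Fin.castSucc (u j₁) l with hρ'
  have hρne : ∀ i : Fin n, i ≠ u j₁ → Fin.castSucc i ≠ i' := by
    intro i hi hri
    exact hi (Fin.castSucc_injective _ hri)
  have hB1 : tmap R n ι₁ (eword R b 1) = wrd c Fin.castSucc := by
    rw [eword, tmap_tprod, wrd]
    congr 1; funext i
    rw [Equiv.Perm.one_apply, hι₁b]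
  have hzw : η (Fin (n+1) → R) (wrd c Fin.castSucc) = z := by
    rw [← hB1, hz, hy]
    have := LinearMap.congr_fun (hnat A (Fin (n+1) → R) ι₁) (eword R b 1)
    simpa only [LinearMap.comp_apply] using this
  have hB2 : tmap R n g (wrd c Fin.castSucc) = wrd c Fin.castSucc + wrd c ρ' := by
    rw [wrd, tmap_tprod]
    have hupd : (fun j : Fin n => g (c (Fin.castSucc j)))
        = Function.update (fun j : Fin n => c (Fin.castSucc j)) (u j₁) (c i' + c l) := by
      funext j
      rcases eq_or_ne j (u j₁) with rfl | hne2
      · rw [Function.update_self, hgb, hi', if_pos rfl]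
      · rw [Function.update_of_ne hne2, hgb, if_neg (hρne j hne2)]
    rw [hupd, MultilinearMap.map_update_add]
    congr 1
    · rw [show (c i' : Fin (n+1) → R) = (fun j : Fin n => c (Fin.castSucc j)) (u j₁) from by
        rw [hi']]
      rw [Function.update_eq_self]
    · rw [wrd]
      congr 1
      funext j
      rcases eq_or_ne j (u j₁) with rfl | hne2
      · rw [Function.update_self, hρ', Function.update_self]
      · rw [Function.update_of_ne hne2, hρ', Function.update_of_ne hne2]
  have hB3 : tmap R n h (wrd c Fin.castSucc) = wrd c ρ' := by
    rw [wrd, wrd, tmap_tprod]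
    congr 1
    funext j
    rcases eq_or_ne j (u j₁) with rfl | hne2
    · rw [hhb, hi', if_pos rfl, hρ', Function.update_self]
    · rw [hhb, if_neg (hρne j hne2), hρ', Function.update_of_ne hne2]
  set u'' : Fin m → Fin (n+1) := Function.update (fun j => Fin.castSucc (u j)) j₁ l with hu''
  have hu''j₁ : u'' j₁ = l := Function.update_self _ _ _
  have hu''ne : ∀ j, j ≠ j₁ → u'' j = Fin.castSucc (u j) := fun j hjj =>
    Function.update_of_ne hjj _ _
  have hch2 : c.coord i' ∘ₗ h = 0 := by
    refine c.ext fun k => ?_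
    rw [LinearMap.comp_apply, hhb, LinearMap.zero_apply]
    by_cases hk : k = i'
    · rw [if_pos hk, coord_basis, if_neg (fun hh2 => hil hh2.symm)]
    · rw [if_neg hk, coord_basis, if_neg hk]
  have hB4 : fc c u'' ∘ₗ tmap R m h = 0 := by
    refine pt_funext fun x => ?_
    simp only [LinearMap.comp_apply, tmap_tprod, fc_tprod, LinearMap.zero_apply]
    refine Finset.prod_eq_zero (Finset.mem_univ j₂) ?_
    have hu2 : u'' j₂ = i' := by rw [hu''ne j₂ (Ne.symm hj), ← huu]
    rw [hu2]
    exact LinearMap.congr_fun hch2 (x j₂)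
  have hcg_last : c.coord l ∘ₗ g = c.coord l + c.coord i' := by
    refine c.ext fun k => ?_
    rw [LinearMap.comp_apply, hgb, LinearMap.add_apply]
    by_cases hk : k = i'
    · rw [if_pos hk, map_add, coord_basis, coord_basis, coord_basis, coord_basis,
        if_neg hil, if_pos rfl, if_neg (show ¬ k = l from fun hh2 => hil (hk ▸ hh2)),
        if_pos hk]
    · rw [if_neg hk, coord_basis, coord_basis, if_neg hk, add_zero]
  have hcg_ne : ∀ t : Fin (n+1), t ≠ l → c.coord t ∘ₗ g = c.coord t := by
    intro t ht
    refine c.ext fun k => ?_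
    rw [LinearMap.comp_apply, hgb]
    by_cases hk : k = i'
    · rw [if_pos hk, map_add, coord_basis, coord_basis, coord_basis,
        if_neg (show ¬ l = t from fun hh2 => ht hh2.symm), add_zero, hk]
    · rw [if_neg hk]
  have hB5 : fc c u'' ∘ₗ tmap R m g = fc c u'' + fc c (fun j => Fin.castSucc (u j)) := by
    refine pt_funext fun x => ?_
    simp only [LinearMap.comp_apply, tmap_tprod, fc_tprod, LinearMap.add_apply]
    rw [← Finset.mul_prod_erase Finset.univ
        (fun j => c.coord (u'' j) (g (x j))) (Finset.mem_univ j₁),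
      ← Finset.mul_prod_erase Finset.univ
        (fun j => c.coord (u'' j) (x j)) (Finset.mem_univ j₁),
      ← Finset.mul_prod_erase Finset.univ
        (fun j => c.coord (Fin.castSucc (u j)) (x j)) (Finset.mem_univ j₁)]
    have e1 : c.coord (u'' j₁) (g (x j₁))
        = c.coord (u'' j₁) (x j₁) + c.coord (Fin.castSucc (u j₁)) (x j₁) := by
      rw [hu''j₁]
      have := LinearMap.congr_fun hcg_last (x j₁)
      simpa only [LinearMap.comp_apply, LinearMap.add_apply] using this
    have e2 : ∀ j ∈ Finset.univ.erase j₁,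
        c.coord (u'' j) (g (x j)) = c.coord (u'' j) (x j) := by
      intro j hjmem
      have hjne : j ≠ j₁ := Finset.ne_of_mem_erase hjmem
      have hune : u'' j ≠ l := by
        rw [hu''ne j hjne]
        exact (Fin.castSucc_lt_last _).ne
      have := LinearMap.congr_fun (hcg_ne _ hune) (x j)
      simpa only [LinearMap.comp_apply] using this
    have e3 : ∀ j ∈ Finset.univ.erase j₁,
        c.coord (u'' j) (x j) = c.coord (Fin.castSucc (u j)) (x j) := by
      intro j hjmem
      rw [hu''ne j (Finset.ne_of_mem_erase hjmem)]
    rw [Finset.prod_congr rfl e2, e1, add_mul, Finset.prod_congr rfl e3]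
  have hB6 : fc c (fun j => Fin.castSucc (u j)) ∘ₗ tmap R m ι₁ = fc b u := by
    refine pt_funext fun x => ?_
    simp only [LinearMap.comp_apply, tmap_tprod, fc_tprod]
    refine Finset.prod_congr rfl fun j _ => ?_
    have hcoord : c.coord (Fin.castSucc (u j)) ∘ₗ ι₁ = b.coord (u j) := by
      refine b.ext fun k => ?_
      rw [LinearMap.comp_apply, hι₁b, coord_basis, coord_basis]
      simp only [Fin.castSucc_inj]
    have := LinearMap.congr_fun hcoord (x j)
    simpa only [LinearMap.comp_apply] using this
  have hkey : tmap R m g z = z + tmap R m h z := by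
    have hg1 := LinearMap.congr_fun
      (hnat (Fin (n+1) → R) (Fin (n+1) → R) g) (wrd c Fin.castSucc)
    have hh1 := LinearMap.congr_fun
      (hnat (Fin (n+1) → R) (Fin (n+1) → R) h) (wrd c Fin.castSucc)
    simp only [LinearMap.comp_apply] at hg1 hh1
    calc tmap R m g z = tmap R m g (η (Fin (n+1) → R) (wrd c Fin.castSucc)) := by rw [hzw]
      _ = η (Fin (n+1) → R) (tmap R n g (wrd c Fin.castSucc)) := hg1.symm
      _ = η (Fin (n+1) → R) (wrd c Fin.castSucc) + η (Fin (n+1) → R) (wrd c ρ') := by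
          rw [hB2, map_add]
      _ = z + η (Fin (n+1) → R) (tmap R n h (wrd c Fin.castSucc)) := by rw [hzw, hB3]
      _ = z + tmap R m h (η (Fin (n+1) → R) (wrd c Fin.castSucc)) := by rw [hh1]
      _ = z + tmap R m h z := by rw [hzw]
  have hfin := congrArg (fc c u'') hkey
  have e4 : fc c u'' (tmap R m h z) = 0 := by
    have := LinearMap.congr_fun hB4 z
    simpa only [LinearMap.comp_apply, LinearMap.zero_apply] using this
  have e5 : fc c u'' (tmap R m g z)
      = fc c u'' z + fc c (fun j => Fin.castSucc (u j)) z := by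
    have := LinearMap.congr_fun hB5 z
    simpa only [LinearMap.comp_apply, LinearMap.add_apply] using this
  rw [map_add, e4, add_zero, e5] at hfin
  have h6 : fc c (fun j => Fin.castSucc (u j)) z = 0 := by
    exact add_eq_left.mp hfin
  have e6 : fc c (fun j => Fin.castSucc (u j)) (tmap R m ι₁ y) = fc b u y := by
    have := LinearMap.congr_fun hB6 y
    simpa only [LinearMap.comp_apply] using this
  rw [hz, e6] at h6
  exact h6

end AuxMachinery



section MoreAux

variable {R}

/-- The natural endomorphism of `T_n` determined by an element `p` of `V̄^{⊗n}`. -/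
def etaOf (b : Module.Basis (Fin n) R A) (p : ⨂[R]^n A) : TnEnd R n :=
  fun V _ _ => ∑ σ : Equiv.Perm (Fin n), lamb R b ⇑σ p • pact R V n σ⁻¹

lemma etaOf_apply (b : Module.Basis (Fin n) R A) (p : ⨂[R]^n A) (V : Type u)
    [AddCommGroup V] [Module R V] (x : ⨂[R]^n V) :
    etaOf b p V x = ∑ σ : Equiv.Perm (Fin n), lamb R b ⇑σ p • pact R V n σ⁻¹ x := by
  simp [etaOf]

end MoreAux

/-- If `n ≠ m` then every natural transformation with `R`-linear
components from `T_n : V ↦ V^{⊗n}` to `T_m : V ↦ V^{⊗m}` is zero; moreover the map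
`θ : End_{R(Σ_n)}(γ_n) → End(T_n)`, sending `φ` to the natural endomorphism whose
component at `V` is `φ ⊗_{R(Σ_n)} id` under the canonical identification
`γ_n ⊗_{R(Σ_n)} V^{⊗n} ≅ V^{⊗n}`, is an isomorphism of rings. -/
theorem statement8 (R : Type u) [CommRing R] (n m : ℕ) (hn : 1 ≤ n) (hm : 1 ≤ m)
    (A : Type u) [AddCommGroup A] [Module R A] (b : Module.Basis (Fin n) R A) :
    (n ≠ m → ∀ (η : ∀ (V : Type u) [AddCommGroup V] [Module R V],
        (⨂[R]^n V) →ₗ[R] (⨂[R]^m V)),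
      (∀ (V W : Type u) [AddCommGroup V] [Module R V] [AddCommGroup W] [Module R W]
        (f : V →ₗ[R] W), (η W) ∘ₗ (tmap R n f) = (tmap R m f) ∘ₗ (η V)) →
      ∀ (V : Type u) [AddCommGroup V] [Module R V] (x : ⨂[R]^n V), η V x = 0) ∧
    (∀ φ : ↥(gammaN R b) →ₗ[R] ↥(gammaN R b), IsEquivariant R b (gammaN R b) φ →
      ∃! η : TnEnd R n, IsNaturalT R n η ∧ CorrT R b φ η) ∧
    (∀ η : TnEnd R n, IsNaturalT R n η →
      ∃! φ : ↥(gammaN R b) →ₗ[R] ↥(gammaN R b),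
        IsEquivariant R b (gammaN R b) φ ∧ CorrT R b φ η) ∧
    (∀ (φ φ' : ↥(gammaN R b) →ₗ[R] ↥(gammaN R b)) (η η' : TnEnd R n),
      CorrT R b φ η → CorrT R b φ' η' →
        CorrT R b (φ ∘ₗ φ') (fun V _ _ => (η V) ∘ₗ (η' V)) ∧
        CorrT R b (φ + φ') (fun V _ _ => η V + η' V)) ∧
    CorrT R b LinearMap.id (fun V _ _ => LinearMap.id) := by
  classical
  have hmem1 : eword R b 1 ∈ gammaN R b := eword_mem b 1
  refine ⟨?_, ?_, ?_, ?_, ?_⟩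
  · -- Part 1 : `Hom (T_n, T_m) = 0` for `n ≠ m`.
    intro hne η hnat V _ _ x
    have hy : η A (eword R b 1) = 0 := by
      rw [pt_expand b (η A (eword R b 1))]
      refine Finset.sum_eq_zero fun u _ => ?_
      by_cases hsurj : Function.Surjective u
      · have hninj : ¬ Function.Injective u := by
          intro hinj
          have : m = n := by simpa using Fintype.card_of_bijective ⟨hinj, hsurj⟩
          exact hne this.symm
        rw [Function.Injective] at hninj
        push_neg at hninj
        obtain ⟨j₁, j₂, huu, hjne⟩ := hninj
        rw [coeff_noninj b η hnat u j₁ j₂ hjne huu, zero_smul]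
      · rw [coeff_nonsurj b (η A) (fun f => hnat A A f) 1 u hsurj, zero_smul]
    induction x using PiTensorProduct.induction_on with
    | smul_tprod r x =>
      rw [map_smul]
      have hx0 : η V (tprod R x) = 0 := by
        have h1 : tmap R n (b.constr ℕ x) (eword R b 1) = tprod R x := by
          rw [tmap_constr_eword]
          exact congrArg (fun v => PiTensorProduct.tprod R v) (funext fun i => rfl)
        have h2 := LinearMap.congr_fun (hnat A V (b.constr ℕ x)) (eword R b 1)
        simp only [LinearMap.comp_apply] at h2
        rw [← h1, h2, hy, map_zero]
      rw [hx0, smul_zero]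
    | add x y hx hy' => rw [map_add, hx, hy', add_zero]
  · -- Part 2 : `θ` is surjective (with unique preimage of naturality).
    intro φ hφ
    obtain ⟨p, hpmem, hpdef⟩ : ∃ p : ⨂[R]^n A, p ∈ gammaN R b ∧
        (↑(φ ⟨eword R b 1, hmem1⟩) : ⨂[R]^n A) = p :=
      ⟨_, (φ ⟨eword R b 1, hmem1⟩).2, rfl⟩
    have hφ0 : ∀ h : (0 : ⨂[R]^n A) ∈ gammaN R b,
        (↑(φ ⟨0, h⟩) : ⨂[R]^n A) = 0 := by
      intro h
      rw [show (⟨0, h⟩ : gammaN R b) = 0 from Subtype.ext rfl, map_zero,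
        ZeroMemClass.coe_zero]
    have hφadd : ∀ x y (hx : x ∈ gammaN R b) (hy : y ∈ gammaN R b)
        (hxy : x + y ∈ gammaN R b),
        (↑(φ ⟨x + y, hxy⟩) : ⨂[R]^n A) = ↑(φ ⟨x, hx⟩) + ↑(φ ⟨y, hy⟩) := by
      intro x y hx hy hxy
      rw [show (⟨x + y, hxy⟩ : gammaN R b) = ⟨x, hx⟩ + ⟨y, hy⟩ from Subtype.ext rfl,
        map_add, Submodule.coe_add]
    have hφsmul : ∀ (a : R) x (hx : x ∈ gammaN R b) (hax : a • x ∈ gammaN R b),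
        (↑(φ ⟨a • x, hax⟩) : ⨂[R]^n A) = a • ↑(φ ⟨x, hx⟩) := by
      intro a x hx hax
      rw [show (⟨a • x, hax⟩ : gammaN R b) = a • ⟨x, hx⟩ from Subtype.ext rfl,
        map_smul, SetLike.val_smul]
    refine ⟨etaOf b p, ⟨?_, ?_⟩, ?_⟩
    · -- naturality
      intro V W _ _ _ _ f
      refine pt_funext fun x => ?_
      simp only [LinearMap.comp_apply, tmap_tprod, etaOf_apply, pact_inv_tprod,
        map_sum, map_smul]
    · -- correspondence
      intro q
      obtain ⟨x, hx⟩ := q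
      have key : ∀ (τ : Equiv.Perm (Fin n)) (h : eword R b τ ∈ gammaN R b),
          (↑(φ ⟨eword R b τ, h⟩) : ⨂[R]^n A) = lact R b τ p := by
        intro τ h
        have hlt : lact R b τ (eword R b 1) = eword R b τ := by
          rw [lact_eword, mul_one]
        have hmem2 : lact R b τ (eword R b 1) ∈ gammaN R b := by
          rw [hlt]; exact eword_mem b τ
        have h2 : (⟨eword R b τ, h⟩ : gammaN R b)
            = ⟨lact R b τ (eword R b 1), hmem2⟩ := Subtype.ext hlt.symm
        rw [h2, hφ τ ⟨eword R b 1, hmem1⟩ hmem2, hpdef]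
      have hr : ∀ τ : Equiv.Perm (Fin n), lact R b τ p
          = ∑ σ : Equiv.Perm (Fin n), lamb R b ⇑σ p • eword R b (τ * σ) := by
        intro τ
        conv_lhs => rw [gamma_expand b hpmem]
        rw [map_sum]
        refine Finset.sum_congr rfl fun σ _ => ?_
        rw [map_smul, lact_eword]
      induction hx using Submodule.span_induction with
      | mem w hw =>
        obtain ⟨τ, rfl⟩ := hw
        rw [etaOf_apply]
        refine Eq.trans ?_ (key τ _).symm
        rw [hr τ]
        refine Finset.sum_congr rfl fun σ _ => ?_
        rw [pact_eword]
      | zero => rw [map_zero]; exact (hφ0 _).symm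
      | add x y hx hy ihx ihy => rw [map_add, ihx, ihy]; exact (hφadd x y hx hy _).symm
      | smul a x hx ih => rw [map_smul, ih]; exact (hφsmul a x hx _).symm
    · -- uniqueness
      rintro η' ⟨hnat', hcorr'⟩
      funext V iG iM
      refine pt_funext fun x => ?_
      have hc : η' A (eword R b 1) = p := by
        rw [← hpdef]
        exact hcorr' ⟨eword R b 1, hmem1⟩
      have hfx : tmap R n (b.constr ℕ x) (eword R b 1) = tprod R x := by
        rw [tmap_constr_eword]
        exact congrArg (fun v => PiTensorProduct.tprod R v) (funext fun i => rfl)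
      have h2 := LinearMap.congr_fun (hnat' A V (b.constr ℕ x)) (eword R b 1)
      simp only [LinearMap.comp_apply] at h2
      have h3 : η' V (tprod R x) = tmap R n (b.constr ℕ x) p := by
        rw [← hfx, h2, hc]
      have h4 : etaOf b p V (tprod R x) = tmap R n (b.constr ℕ x) p := by
        rw [etaOf_apply]
        conv_rhs => rw [gamma_expand b hpmem, map_sum]
        refine Finset.sum_congr rfl fun σ _ => ?_
        rw [map_smul, tmap_constr_eword, pact_inv_tprod]
      rw [h3, h4]
  · -- Part 3 : `θ` is injective / every natural `η` comes from a unique `φ`.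
    intro η hnat
    have hpres : ∀ x ∈ gammaN R b, η A x ∈ gammaN R b := by
      intro x hx
      refine Submodule.span_induction (p := fun x _ => η A x ∈ gammaN R b)
        ?_ ?_ ?_ ?_ hx
      · rintro w ⟨τ, rfl⟩
        rw [pt_expand b (η A (eword R b τ))]
        refine Submodule.sum_mem _ fun u _ => ?_
        by_cases hsurj : Function.Surjective u
        · have hbij : Function.Bijective u :=
            ⟨Finite.injective_iff_surjective.mpr hsurj, hsurj⟩
          refine Submodule.smul_mem _ _ ?_
          rw [show wrd b u = eword R b (Equiv.ofBijective u hbij) from rfl]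
          exact eword_mem b _
        · rw [coeff_nonsurj b (η A) (fun f => hnat A A f) τ u hsurj, zero_smul]
          exact Submodule.zero_mem _
      · show η A 0 ∈ gammaN R b
        rw [map_zero]; exact Submodule.zero_mem _
      · intro x y _ _ h1 h2
        show η A (x + y) ∈ gammaN R b
        rw [map_add]; exact Submodule.add_mem _ h1 h2
      · intro a x _ h1
        show η A (a • x) ∈ gammaN R b
        rw [map_smul]; exact Submodule.smul_mem _ _ h1
    refine ⟨(η A).restrict hpres, ⟨?_, ?_⟩, ?_⟩
    · intro σ q h
      rw [LinearMap.restrict_coe_apply, LinearMap.restrict_coe_apply]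
      have h2 := LinearMap.congr_fun (hnat A A ((b.equiv b σ).toLinearMap)) ↑q
      simp only [LinearMap.comp_apply] at h2
      exact h2
    · intro q
      rw [LinearMap.restrict_coe_apply]
    · rintro φ' ⟨_, hc⟩
      refine LinearMap.ext fun q => Subtype.ext ?_
      rw [← hc q, LinearMap.restrict_coe_apply]
  · -- Part 4 : `θ` is additive and multiplicative.
    intro φ φ' η η' h h'
    constructor
    · intro q
      show (η A) ((η' A) ↑q) = ↑((φ ∘ₗ φ') q)
      rw [h' q]
      exact h (φ' q)
    · intro q
      show η A ↑q + η' A ↑q = ↑((φ + φ') q)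
      rw [h q, h' q]
      rfl
  · -- Part 5 : `θ 1 = 1`.
    intro q
    rfl

end
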